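/- Let Δ := exp_q((a/(q − q⁻¹))ψ)·exp_{q⁻¹}(−(a⁻¹/(q − q⁻¹))ψ). Then for 0 ≤ i ≤ d, both (Δ − I)W_i ⊆ W_0 + W_1 + ⋯ + W_{i−1} and (Δ⁻¹ − I)W_i ⊆ W_0 + W_1 + ⋯ + W_{i−1}, where Δ⁻¹ = exp_q((a⁻¹/(q − q⁻¹))ψ)·exp_{q⁻¹}(−(a/(q − q⁻¹))ψ). -/

import Mathlib

noncomputable def qNum {𝕂 : Type*} [Field 𝕂] (q : 𝕂) (n : ℕ) : 𝕂 :=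
  (q ^ n - q⁻¹ ^ n) / (q - q⁻¹)

noncomputable def qFact {𝕂 : Type*} [Field 𝕂] (q : 𝕂) (n : ℕ) : 𝕂 :=
  ∏ j ∈ Finset.range n, qNum q (j + 1)

noncomputable def qExp {𝕂 : Type*} [Field 𝕂] {V : Type*} [AddCommGroup V] [Module 𝕂 V]
    (q : 𝕂) (N : ℕ) (T : Module.End 𝕂 V) : Module.End 𝕂 V :=
  ∑ n ∈ Finset.range N, (q ^ (n * (n - 1) / 2) / qFact q n) • T ^ n

noncomputable def qExpInv {𝕂 : Type*} [Field 𝕂] {V : Type*} [AddCommGroup V] [Module 𝕂 V]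
    (q : 𝕂) (N : ℕ) (T : Module.End 𝕂 V) : Module.End 𝕂 V :=
  ∑ n ∈ Finset.range N, (q⁻¹ ^ (n * (n - 1) / 2) / qFact q n) • T ^ n

section scalar
variable {𝕂 : Type*} [Field 𝕂]

private lemma tri (n : ℕ) : (n+1)*n/2 = n*(n-1)/2 + n := by
  cases n with
  | zero => rfl
  | succ n =>
      rw [show (n+1+1)*(n+1) = (n+1)*((n+1)-1) + 2*(n+1) by simp; ring,
        Nat.add_mul_div_left _ _ (by norm_num : 0 < 2)]

private lemma qFact_succ (q : 𝕂) (n : ℕ) : qFact q (n+1) = qFact q n * qNum q (n+1) :=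
  Finset.prod_range_succ _ _

private lemma qFact_ne_zero {q : 𝕂} {d : ℕ} (hnum : ∀ j, 1 ≤ j → j ≤ d → qNum q j ≠ 0)
    {n : ℕ} (hn : n ≤ d) : qFact q n ≠ 0 := by
  induction n with
  | zero => simp [qFact]
  | succ n ih =>
      rw [qFact_succ]
      exact mul_ne_zero (ih (by omega)) (hnum (n+1) (by omega) hn)

private noncomputable def qt (q : 𝕂) (k l : ℕ) : 𝕂 :=
  (-1)^l * q^(k*(k-1)/2) * (q⁻¹)^(l*(l-1)/2) * (qFact q k)⁻¹ * (qFact q l)⁻¹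

private noncomputable def qc (q : 𝕂) (m : ℕ) : 𝕂 := ∑ k ∈ Finset.range (m+1), qt q k (m-k)

private lemma qNum_zero (q : 𝕂) : qNum q 0 = 0 := by simp [qNum]

private lemma qNum_add {q : 𝕂} (hq : q ≠ 0) (k l : ℕ) :
    qNum q (k+l) = q^l * qNum q k + (q⁻¹)^k * qNum q l := by
  have hnum : q^l*(q^k - q⁻¹^k) + q⁻¹^k*(q^l - q⁻¹^l) = q^(k+l) - q⁻¹^(k+l) := by
    field_simp
    ring
  rw [qNum, qNum, qNum, ← mul_div_assoc, ← mul_div_assoc, ← add_div, hnum]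

private lemma qc_zero_eq (q : 𝕂) : qc q 0 = 1 := by
  simp [qc, qt, qFact]

private lemma qc_rec {q : 𝕂} {d : ℕ} (hq : q ≠ 0)
    (hnum : ∀ j, 1 ≤ j → j ≤ d → qNum q j ≠ 0)
    {m : ℕ} (hm1 : 1 ≤ m) (hmd : m ≤ d) :
    qNum q m * qc q m = (q^(m-1) - (q⁻¹)^(m-1)) * qc q (m-1) := by
  obtain ⟨m', rfl⟩ : ∃ m', m = m' + 1 := ⟨m - 1, by omega⟩
  simp only [Nat.add_sub_cancel]
  rw [qc, Finset.mul_sum]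
  have hsplit : ∀ k ∈ Finset.range (m'+2),
      qNum q (m'+1) * qt q k (m'+1-k)
        = q^(m'+1-k) * qNum q k * qt q k (m'+1-k)
          + (q⁻¹)^k * qNum q (m'+1-k) * qt q k (m'+1-k) := by
    intro k hk
    rw [Finset.mem_range] at hk
    have h1 : m'+1 = k + (m'+1-k) := by omega
    rw [h1, qNum_add hq k (m'+1-k)]
    have h2 : k + (m'+1-k) - k = m'+1-k := by omega
    rw [h2]; ring
  rw [Finset.sum_congr rfl hsplit, Finset.sum_add_distrib]
  have hA : ∑ k ∈ Finset.range (m'+2), q^(m'+1-k) * qNum q k * qt q k (m'+1-k)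
      = q^(m') * qc q m' := by
    rw [Finset.sum_range_succ']
    have h0 : q^(m'+1-0) * qNum q 0 * qt q 0 (m'+1-0) = 0 := by
      rw [qNum_zero]; ring
    rw [h0, add_zero, qc, Finset.mul_sum]
    refine Finset.sum_congr rfl ?_
    intro k hk
    rw [Finset.mem_range] at hk
    have e1 : m'+1-(k+1) = m'-k := by omega
    rw [e1]
    unfold qt
    rw [qFact_succ, mul_inv, show (k+1)*((k+1)-1)/2 = k*(k-1)/2 + k by
      simpa using tri k]
    have hnz1 : qNum q (k+1) ≠ 0 := hnum (k+1) (by omega) (by omega)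
    have c1 : qNum q (k+1) * (qNum q (k+1))⁻¹ = 1 := mul_inv_cancel₀ hnz1
    have c2 : q^(m'-k) * q^k = q^(m') := by
      rw [← pow_add]; congr 1; omega
    set R := (-1:𝕂)^(m'-k) * q^(k*(k-1)/2) * (q⁻¹)^((m'-k)*((m'-k)-1)/2)
        * (qFact q k)⁻¹ * (qFact q (m'-k))⁻¹ with hR
    linear_combination (q^(m'-k) * q^k * R) * c1 + R * c2
  have hB : ∑ k ∈ Finset.range (m'+2), (q⁻¹)^k * qNum q (m'+1-k) * qt q k (m'+1-k)
      = -((q⁻¹)^(m') * qc q m') := by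
    rw [Finset.sum_range_succ]
    have h0 : (q⁻¹)^(m'+1) * qNum q (m'+1-(m'+1)) * qt q (m'+1) (m'+1-(m'+1)) = 0 := by
      simp [qNum_zero]
    rw [h0, add_zero, qc, Finset.mul_sum, ← Finset.sum_neg_distrib]
    refine Finset.sum_congr rfl ?_
    intro k hk
    rw [Finset.mem_range] at hk
    have e1 : m'+1-k = (m'-k)+1 := by omega
    rw [e1]
    unfold qt
    rw [qFact_succ, mul_inv, show ((m'-k)+1)*(((m'-k)+1)-1)/2 = (m'-k)*((m'-k)-1)/2 + (m'-k) by
      simpa using tri (m'-k)]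
    have hnz1 : qNum q ((m'-k)+1) ≠ 0 := hnum _ (by omega) (by omega)
    have c1 : qNum q ((m'-k)+1) * (qNum q ((m'-k)+1))⁻¹ = 1 := mul_inv_cancel₀ hnz1
    have c2 : (q⁻¹)^k * (q⁻¹)^(m'-k) = (q⁻¹)^(m') := by
      rw [← pow_add]; congr 1; omega
    set R := (-1:𝕂)^(m'-k) * q^(k*(k-1)/2) * (q⁻¹)^((m'-k)*((m'-k)-1)/2)
        * (qFact q k)⁻¹ * (qFact q (m'-k))⁻¹ with hR
    linear_combination (-((q⁻¹)^k * (q⁻¹)^(m'-k) * R)) * c1 + (-R) * c2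
  rw [hA, hB]
  ring

private lemma qc_eq_zero {q : 𝕂} {d : ℕ} (hq : q ≠ 0)
    (hnum : ∀ j, 1 ≤ j → j ≤ d → qNum q j ≠ 0)
    {m : ℕ} (hm1 : 1 ≤ m) (hmd : m ≤ d) : qc q m = 0 := by
  induction m with
  | zero => omega
  | succ m ih =>
      have hrec := qc_rec hq hnum (m := m+1) (by omega) hmd
      have hnz : qNum q (m+1) ≠ 0 := hnum _ (by omega) hmd
      rcases Nat.eq_zero_or_pos m with hm0 | hm0
      · subst hm0
        simp only [Nat.add_sub_cancel, pow_zero, sub_self, zero_mul] at hrec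
        exact (mul_eq_zero.mp hrec).resolve_left hnz
      · rw [Nat.add_sub_cancel, ih hm0 (by omega)] at hrec
        rw [mul_zero] at hrec
        exact (mul_eq_zero.mp hrec).resolve_left hnz

end scalar

section operator

variable {𝕂 : Type*} [Field 𝕂] {V : Type*} [AddCommGroup V] [Module 𝕂 V]

private lemma sum_pow_mul_sum_pow (ψ : Module.End 𝕂 V) {N : ℕ} (hnil : ψ^N = 0)
    (f g : ℕ → 𝕂) :
    (∑ n ∈ Finset.range N, f n • ψ^n) * (∑ n ∈ Finset.range N, g n • ψ^n)
      = ∑ m ∈ Finset.range N, (∑ k ∈ Finset.range (m+1), f k * g (m-k)) • ψ^m := by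
  have step1 : (∑ n ∈ Finset.range N, f n • ψ^n) * (∑ n ∈ Finset.range N, g n • ψ^n)
      = ∑ n ∈ Finset.range N, ∑ k ∈ Finset.range N, (f n * g k) • ψ^(n+k) := by
    rw [Finset.sum_mul]
    refine Finset.sum_congr rfl fun n _ => ?_
    rw [Finset.mul_sum]
    refine Finset.sum_congr rfl fun k _ => ?_
    rw [smul_mul_assoc, mul_smul_comm, smul_smul, ← pow_add]
  rw [step1]
  have step2 : ∀ n ∈ Finset.range N,
      ∑ k ∈ Finset.range N, (f n * g k) • ψ^(n+k)
        = ∑ k ∈ Finset.range (N-n), (f n * g k) • ψ^(n+k) := by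
    intro n hn
    rw [Finset.mem_range] at hn
    rw [← Finset.sum_range_add_sum_Ico _ (show N-n ≤ N by omega)]
    have hz : ∀ k ∈ Finset.Ico (N-n) N, (f n * g k) • ψ^(n+k) = 0 := by
      intro k hk
      rw [Finset.mem_Ico] at hk
      have hp : ψ^(n+k) = 0 := by
        rw [show n+k = N + (n+k-N) by omega, pow_add, hnil, zero_mul]
      rw [hp, smul_zero]
    rw [Finset.sum_eq_zero hz, add_zero]
  rw [Finset.sum_congr rfl step2]
  have step3 : ∀ m ∈ Finset.range N,
      (∑ k ∈ Finset.range (m+1), f k * g (m-k)) • ψ^m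
        = ∑ k ∈ Finset.range (m+1), (f k * g (m-k)) • ψ^m := by
    intro m _
    rw [Finset.sum_smul]
  rw [Finset.sum_congr rfl step3, Finset.sum_sigma', Finset.sum_sigma']
  refine Finset.sum_nbij' (fun p => ⟨p.1 + p.2, p.1⟩) (fun p => ⟨p.2, p.1 - p.2⟩)
    ?_ ?_ ?_ ?_ ?_
  · rintro ⟨n, k⟩ h
    simp only [Finset.mem_sigma, Finset.mem_range] at h ⊢
    omega
  · rintro ⟨m, k⟩ h
    simp only [Finset.mem_sigma, Finset.mem_range] at h ⊢
    omega
  · rintro ⟨n, k⟩ h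
    simp only [Finset.mem_sigma, Finset.mem_range] at h
    exact Sigma.ext (by dsimp only; try omega) (heq_of_eq (by dsimp only; try omega))
  · rintro ⟨m, k⟩ h
    simp only [Finset.mem_sigma, Finset.mem_range] at h
    exact Sigma.ext (by dsimp only; try omega) (heq_of_eq (by dsimp only; try omega))
  · rintro ⟨n, k⟩ h
    simp only [Finset.mem_sigma, Finset.mem_range] at h
    simp only [Nat.add_sub_cancel_left]

end operator

theorem stmt_15
    {𝕂 : Type*} [Field 𝕂] {V : Type*} [AddCommGroup V] [Module 𝕂 V]
    [FiniteDimensional 𝕂 V]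
    (d : ℕ) (hd : 1 ≤ d) (q a : 𝕂) (hq : q ≠ 0) (ha : a ≠ 0)
    (hq2 : ∀ i : ℕ, 1 ≤ i → i ≤ d → q ^ (2 * i) ≠ 1)
    (ha2 : ∀ i : ℤ, 1 - (d : ℤ) ≤ i → i ≤ (d : ℤ) - 1 → a ^ 2 ≠ q ^ (2 * i))
    (K : Module.End 𝕂 V) (hK : IsUnit K)
    (U : ℕ → Submodule 𝕂 V)
    (hUne : ∀ i, i ≤ d → U i ≠ ⊥)
    (hUint : DirectSum.IsInternal (fun i : Fin (d + 1) => U i.1))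
    (hKU : ∀ i, i ≤ d → ∀ v ∈ U i, K v = (q ^ ((d : ℤ) - 2 * (i : ℤ))) • v)
    (ψ : Module.End 𝕂 V)
    (hψ0 : ∀ v ∈ U 0, ψ v = 0)
    (hψU : ∀ i, 1 ≤ i → i ≤ d → ∀ v ∈ U i, ψ v ∈ U (i - 1))
    (hψnil : ψ ^ (d + 1) = 0)
    (hKψ : K * ψ = q ^ 2 • (ψ * K))
    (hinv : ∀ x : 𝕂, IsUnit (1 - x • ψ))
    (B : Module.End 𝕂 V)
    (hB : B = (1 - (a * q) • ψ) * Ring.inverse (1 - (a⁻¹ * q) • ψ) * K)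
    (M : Module.End 𝕂 V)
    (hM : M = (a - a⁻¹)⁻¹ • (a • K - a⁻¹ • B))
    (hMunit : IsUnit M):
    qExp q (d + 1) ((a / (q - q⁻¹)) • ψ) * qExpInv q (d + 1) (-((a⁻¹ / (q - q⁻¹)) • ψ)) *
      (qExp q (d + 1) ((a⁻¹ / (q - q⁻¹)) • ψ) * qExpInv q (d + 1) (-((a / (q - q⁻¹)) • ψ))) = 1 ∧
    qExp q (d + 1) ((a⁻¹ / (q - q⁻¹)) • ψ) * qExpInv q (d + 1) (-((a / (q - q⁻¹)) • ψ)) *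
      (qExp q (d + 1) ((a / (q - q⁻¹)) • ψ) * qExpInv q (d + 1) (-((a⁻¹ / (q - q⁻¹)) • ψ))) = 1 ∧
    ∀ i, i ≤ d →
      Submodule.map
        (qExp q (d + 1) ((a / (q - q⁻¹)) • ψ) * qExpInv q (d + 1) (-((a⁻¹ / (q - q⁻¹)) • ψ)) - 1)
        (Module.End.eigenspace M (q ^ ((d : ℤ) - 2 * (i : ℤ)))) ≤ (∑ j ∈ Finset.range i, Module.End.eigenspace M (q ^ ((d : ℤ) - 2 * (j : ℤ)))) ∧
      Submodule.map
        (qExp q (d + 1) ((a⁻¹ / (q - q⁻¹)) • ψ) * qExpInv q (d + 1) (-((a / (q - q⁻¹)) • ψ)) - 1)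
        (Module.End.eigenspace M (q ^ ((d : ℤ) - 2 * (i : ℤ)))) ≤ ∑ j ∈ Finset.range i, Module.End.eigenspace M (q ^ ((d : ℤ) - 2 * (j : ℤ))) := by
  -- basic scalar facts
  have hq21 : q ^ 2 ≠ 1 := by simpa using hq2 1 le_rfl hd
  have hnum : ∀ j, 1 ≤ j → j ≤ d → qNum q j ≠ 0 := by
    intro j h1 h2
    have hqq : q - q⁻¹ ≠ 0 := by
      refine sub_ne_zero.mpr fun h => hq2 1 le_rfl hd ?_
      rw [show 2*1 = 2 by rfl, sq]
      nth_rewrite 2 [h]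
      exact mul_inv_cancel₀ hq
    rw [qNum]
    refine div_ne_zero (fun h => hq2 j h1 h2 ?_) hqq
    have hj : q^j = q⁻¹^j := sub_eq_zero.mp h
    calc q^(2*j) = q^j * q^j := by rw [two_mul, pow_add]
    _ = q^j * q⁻¹^j := by nth_rewrite 2 [hj]; rfl
    _ = (q * q⁻¹)^j := (mul_pow _ _ _).symm
    _ = 1 := by rw [mul_inv_cancel₀ hq, one_pow]
  have ha1 : a - a⁻¹ ≠ 0 := by
    refine sub_ne_zero.mpr fun h => ha2 0 (by omega) (by omega) ?_
    rw [mul_zero, zpow_zero, sq]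
    nth_rewrite 2 [h]
    exact mul_inv_cancel₀ ha
  -- commutation facts
  have hcommψ : ∀ x y : 𝕂, Commute ((1 : Module.End 𝕂 V) - x • ψ) (1 - y • ψ) := by
    intro x y
    have c0 : Commute (x • ψ) (y • ψ) := ((Commute.refl ψ).smul_left x).smul_right y
    exact (Commute.one_left _).sub_left ((Commute.one_right _).sub_right c0)
  have hψG : ψ * ((1 : Module.End 𝕂 V) - (a⁻¹*q) • ψ) = (1 - (a⁻¹*q) • ψ) * ψ :=
    ((Commute.one_right ψ).sub_right ((Commute.refl ψ).smul_right _)).eq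
  have hGu : IsUnit ((1 : Module.End 𝕂 V) - (a⁻¹*q) • ψ) := hinv _
  -- G * B
  have hGB : ((1 : Module.End 𝕂 V) - (a⁻¹*q) • ψ) * B = (1 - (a*q) • ψ) * K := by
    rw [hB, ← mul_assoc, ← mul_assoc, (hcommψ (a⁻¹*q) (a*q)).eq, mul_assoc _ _ (Ring.inverse _),
      Ring.mul_inverse_cancel _ hGu, mul_one]
  -- G * M = K
  have hGM : ((1 : Module.End 𝕂 V) - (a⁻¹*q) • ψ) * M = K := by
    rw [hM, mul_smul_comm, mul_sub, mul_smul_comm, mul_smul_comm, hGB]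
    simp only [sub_mul, one_mul, smul_mul_assoc, smul_sub, smul_smul]
    rw [show (a - a⁻¹)⁻¹ * (a * (a⁻¹ * q)) = (a - a⁻¹)⁻¹ * (a⁻¹ * (a * q)) from by ring]
    rw [sub_sub_sub_cancel_right, ← sub_smul]
    rw [show (a - a⁻¹)⁻¹ * a - (a - a⁻¹)⁻¹ * a⁻¹ = 1 from by
      rw [← mul_sub, inv_mul_cancel₀ ha1], one_smul]
  -- M ψ = q² ψ M
  have hMψ : M * ψ = (q^2 : 𝕂) • (ψ * M) := by
    apply hGu.mul_left_cancel
    calc ((1 : Module.End 𝕂 V) - (a⁻¹*q) • ψ) * (M * ψ)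
        = (((1 : Module.End 𝕂 V) - (a⁻¹*q) • ψ) * M) * ψ := (mul_assoc _ _ _).symm
      _ = K * ψ := by rw [hGM]
      _ = q^2 • (ψ * K) := hKψ
      _ = q^2 • (ψ * (((1 : Module.End 𝕂 V) - (a⁻¹*q) • ψ) * M)) := by rw [hGM]
      _ = q^2 • ((ψ * ((1 : Module.End 𝕂 V) - (a⁻¹*q) • ψ)) * M) := by rw [mul_assoc]
      _ = q^2 • (((1 : Module.End 𝕂 V) - (a⁻¹*q) • ψ) * (ψ * M)) := by rw [hψG, mul_assoc]
      _ = ((1 : Module.End 𝕂 V) - (a⁻¹*q) • ψ) * (q^2 • (ψ * M)) := (mul_smul_comm _ _ _).symm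
  -- explicit inverse series
  have hSG : (∑ n ∈ Finset.range (d+1), ((a⁻¹*q)^n) • ψ^n) * ((1 : Module.End 𝕂 V) - (a⁻¹*q) • ψ)
      = 1 := by
    rw [mul_sub, mul_one, mul_smul_comm, Finset.sum_mul]
    rw [Finset.sum_congr rfl (fun n _ => by
      rw [smul_mul_assoc, ← pow_succ] :
      ∀ n ∈ Finset.range (d+1), ((a⁻¹*q)^n • ψ^n) * ψ = (a⁻¹*q)^n • ψ^(n+1))]
    rw [Finset.smul_sum]
    rw [Finset.sum_congr rfl (fun n _ => by
      rw [smul_smul, ← pow_succ'] :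
      ∀ n ∈ Finset.range (d+1), (a⁻¹*q) • ((a⁻¹*q)^n • ψ^(n+1)) = (a⁻¹*q)^(n+1) • ψ^(n+1))]
    rw [Finset.sum_range_succ' (fun n => ((a⁻¹*q)^n) • ψ^n) d]
    rw [Finset.sum_range_succ (fun n => ((a⁻¹*q)^(n+1)) • ψ^(n+1)) d]
    rw [hψnil, smul_zero, add_zero, pow_zero, pow_zero, one_smul]
    abel
  have hMS : M = (∑ n ∈ Finset.range (d+1), ((a⁻¹*q)^n) • ψ^n) * K := by
    have h := congrArg (fun z => (∑ n ∈ Finset.range (d+1), ((a⁻¹*q)^n) • ψ^n) * z) hGM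
    rw [← mul_assoc, hSG, one_mul] at h
    exact h
  -- submodule sum helpers
  have hle_sum : ∀ (W : ℕ → Submodule 𝕂 V) (j k : ℕ), j < k →
      W j ≤ ∑ j' ∈ Finset.range k, W j' := by
    intro W j k hjk
    induction k with
    | zero => omega
    | succ k ih =>
        rw [Finset.sum_range_succ, Submodule.add_eq_sup]
        rcases Nat.lt_succ_iff_lt_or_eq.mp hjk with h | h
        · exact (ih h).trans le_sup_left
        · exact h ▸ le_sup_right
  have hsum_le : ∀ (k : ℕ) (p : Submodule 𝕂 V), (∀ j, j < k → U j ≤ p) →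
      (∑ j ∈ Finset.range k, U j) ≤ p := by
    intro k
    induction k with
    | zero => intro p _; simp
    | succ k ih =>
        intro p h
        rw [Finset.sum_range_succ, Submodule.add_eq_sup]
        exact sup_le (ih p fun j hj => h j (by omega)) (h k (by omega))
  have hFmono : ∀ j k : ℕ, j ≤ k →
      (∑ i ∈ Finset.range j, U i) ≤ ∑ i ∈ Finset.range k, U i :=
    fun j k h => hsum_le j _ (fun i hi => hle_sum U i k (by omega))
  -- ψ lowers the filtration
  have hψU' : ∀ k, k ≤ d → ∀ u ∈ U k, ψ u ∈ ∑ j ∈ Finset.range k, U j := by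
    intro k hk u hu
    rcases Nat.eq_zero_or_pos k with h0 | h0
    · subst h0; rw [hψ0 u hu]; exact zero_mem _
    · exact hle_sum U (k-1) k (by omega) (hψU k h0 hk u hu)
  have hψF : ∀ k, k ≤ d + 1 → ∀ v ∈ (∑ j ∈ Finset.range k, U j),
      ψ v ∈ ∑ j ∈ Finset.range k, U j := by
    intro k hk v hv
    refine hsum_le k (Submodule.comap ψ (∑ j ∈ Finset.range k, U j)) ?_ hv
    intro j hj u hu
    simp only [Submodule.mem_comap]
    exact hFmono j k (by omega) (hψU' j (by omega) u hu)
  have hψnF : ∀ k, k ≤ d + 1 → ∀ n : ℕ, ∀ v ∈ (∑ j ∈ Finset.range k, U j),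
      (ψ^n) v ∈ ∑ j ∈ Finset.range k, U j := by
    intro k hk n
    induction n with
    | zero => intro v hv; simpa using hv
    | succ n ih =>
        intro v hv
        rw [pow_succ', Module.End.mul_apply]
        exact hψF k hk _ (ih v hv)
  -- M action on U k modulo the filtration
  have hMU : ∀ k, k ≤ d → ∀ u ∈ U k,
      M u - (q ^ ((d : ℤ) - 2 * (k : ℤ))) • u ∈ ∑ j ∈ Finset.range k, U j := by
    intro k hk u hu
    have hKu := hKU k hk u hu
    have hMu : M u = ∑ n ∈ Finset.range (d+1),
        ((a⁻¹*q)^n * q ^ ((d : ℤ) - 2 * (k : ℤ))) • ((ψ^n) u) := by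
      rw [hMS, Module.End.mul_apply, hKu, map_smul, LinearMap.sum_apply]
      rw [Finset.smul_sum]
      refine Finset.sum_congr rfl fun n _ => ?_
      rw [LinearMap.smul_apply, smul_smul]
      exact congrArg (fun z => z • ((ψ^n) u)) (mul_comm _ _)
    rw [hMu, Finset.sum_range_succ']
    simp only [pow_zero, one_mul, pow_zero, Module.End.one_apply]
    rw [add_sub_cancel_right]
    apply Submodule.sum_mem
    intro n _
    apply Submodule.smul_mem
    rw [pow_succ, Module.End.mul_apply]
    exact hψnF k (by omega) n _ (hψU' k hk u hu)
  have hMF : ∀ k, k ≤ d → ∀ v ∈ (∑ j ∈ Finset.range k, U j),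
      M v ∈ ∑ j ∈ Finset.range k, U j := by
    intro k hk v hv
    refine hsum_le k (Submodule.comap M (∑ j ∈ Finset.range k, U j)) ?_ hv
    intro j hj u hu
    simp only [Submodule.mem_comap]
    have h1 := hMU j (by omega) u hu
    have h2 : M u = (M u - (q ^ ((d : ℤ) - 2 * (j : ℤ))) • u)
        + (q ^ ((d : ℤ) - 2 * (j : ℤ))) • u := by abel
    rw [h2]
    exact add_mem (hFmono j k (by omega) h1)
      (Submodule.smul_mem _ _ (hle_sum U j k hj hu))
  -- disjointness
  have hdisj : ∀ k, k ≤ d → ∀ u ∈ U k, u ∈ (∑ j ∈ Finset.range k, U j) → u = 0 := by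
    intro k hk u hu huF
    have hdis := hUint.submodule_iSupIndep ⟨k, by omega⟩
    have hle : (∑ j ∈ Finset.range k, U j)
        ≤ ⨆ (j : Fin (d+1)) (_ : j ≠ ⟨k, by omega⟩), U j.1 := by
      apply hsum_le
      intro j hj
      have hne : (⟨j, by omega⟩ : Fin (d+1)) ≠ ⟨k, by omega⟩ := by
        simp only [ne_eq, Fin.mk.injEq]
        omega
      exact le_iSup_of_le (⟨j, by omega⟩ : Fin (d+1)) (le_iSup_of_le hne le_rfl)
    exact Submodule.disjoint_def.mp hdis u hu (hle huF)
  have hFtop : (∑ j ∈ Finset.range (d+1), U j) = ⊤ := by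
    apply le_antisymm le_top
    rw [← hUint.submodule_iSup_eq_top]
    apply iSup_le
    intro i
    exact hle_sum U i.1 (d+1) i.isLt
  -- eigenvalue distinctness
  have hμne : ∀ k, 1 ≤ k → k ≤ d → q ^ ((d : ℤ)) ≠ q ^ ((d : ℤ) - 2 * (k : ℤ)) := by
    intro k h1 h2 heq
    apply hq2 k h1 h2
    have hz : (q : 𝕂) ^ (((2*k : ℕ) : ℤ)) = q ^ (2*k) := zpow_natCast q (2*k)
    have hh : q ^ ((d : ℤ) - 2 * (k : ℤ)) * q ^ (((2*k : ℕ) : ℤ)) = q ^ ((d : ℤ)) := by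
      rw [← zpow_add₀ hq]
      congr 1
      push_cast
      ring
    rw [← heq] at hh
    have hqd : q ^ ((d : ℤ)) ≠ 0 := zpow_ne_zero _ hq
    have h4 := mul_left_cancel₀ hqd (hh.trans (mul_one (q ^ ((d : ℤ)))).symm)
    rw [hz] at h4
    exact h4
  -- W₀ ⊆ U₀
  have hW0 : ∀ v, M v = (q ^ ((d : ℤ))) • v → v ∈ U 0 := by
    intro v hv
    have hvF : v ∈ (∑ j ∈ Finset.range (d+1), U j) := by rw [hFtop]; trivial
    have key : ∀ k : ℕ, k ≤ d → v ∈ (∑ j ∈ Finset.range (k+1), U j) →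
        v ∈ (∑ j ∈ Finset.range 1, U j) := by
      intro k
      induction k with
      | zero => intro _ h; exact h
      | succ k ih =>
          intro hk hvk
          apply ih (by omega)
          rw [Finset.sum_range_succ, Submodule.add_eq_sup] at hvk
          obtain ⟨w, hw, u, hu, hwu⟩ := Submodule.mem_sup.mp hvk
          have hMw := hMF (k+1) (by omega) w hw
          have hMu := hMU (k+1) (by omega) u hu
          have hv' : M w + M u = q ^ ((d : ℤ)) • w + q ^ ((d : ℤ)) • u := by
            rw [← map_add, ← smul_add, hwu, hv]
          have hMueq : M u = q ^ ((d : ℤ)) • w + q ^ ((d : ℤ)) • u - M w :=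
            eq_sub_iff_add_eq.mpr (by rw [add_comm]; exact hv')
          have hcomb : (q ^ ((d : ℤ)) - q ^ ((d : ℤ) - 2 * ((k+1 : ℕ) : ℤ))) • u
              = (M w - q ^ ((d : ℤ)) • w)
                + (M u - (q ^ ((d : ℤ) - 2 * ((k+1 : ℕ) : ℤ))) • u) := by
            rw [hMueq, sub_smul]
            abel
          have hcombF : (q ^ ((d : ℤ)) - q ^ ((d : ℤ) - 2 * ((k+1 : ℕ) : ℤ))) • u
              ∈ ∑ j ∈ Finset.range (k+1), U j := by
            rw [hcomb]
            exact add_mem (sub_mem hMw (Submodule.smul_mem _ _ hw)) hMu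
          have hne : q ^ ((d : ℤ)) - q ^ ((d : ℤ) - 2 * ((k+1 : ℕ) : ℤ)) ≠ 0 :=
            sub_ne_zero.mpr (hμne (k+1) (by omega) (by omega))
          have huF : u ∈ ∑ j ∈ Finset.range (k+1), U j := by
            have h5 := Submodule.smul_mem (∑ j ∈ Finset.range (k+1), U j)
              (q ^ ((d : ℤ)) - q ^ ((d : ℤ) - 2 * ((k+1 : ℕ) : ℤ)))⁻¹ hcombF
            rwa [inv_smul_smul₀ hne] at h5
          have hu0 : u = 0 := hdisj (k+1) (by omega) u hu huF
          rw [← hwu, hu0, add_zero]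
          exact hw
    have hv1 := key d le_rfl hvF
    simpa [Finset.sum_range_one] using hv1
  have hψW0 : ∀ v, M v = (q ^ ((d : ℤ))) • v → ψ v = 0 := fun v hv => hψ0 v (hW0 v hv)
  -- ψ lowers eigenspaces of M
  have hstep : ∀ i : ℕ, 1 ≤ i → ∀ v, M v = (q ^ ((d : ℤ) - 2 * (i : ℤ))) • v →
      M (ψ v) = (q ^ ((d : ℤ) - 2 * (((i-1 : ℕ)) : ℤ))) • (ψ v) := by
    intro i h1 v hv
    have h2 : M (ψ v) = (M * ψ) v := rfl
    rw [h2, hMψ, LinearMap.smul_apply, Module.End.mul_apply, hv, map_smul, smul_smul]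
    congr 1
    rw [show ((q : 𝕂) ^ (2 : ℕ)) = q ^ ((2 : ℤ)) from (zpow_natCast q 2).symm, ← zpow_add₀ hq]
    congr 1
    have : ((i - 1 : ℕ) : ℤ) = (i : ℤ) - 1 := by
      omega
    rw [this]
    ring
  have hdesc : ∀ n i : ℕ, n ≤ i → i ≤ d → ∀ v, M v = (q ^ ((d : ℤ) - 2 * (i : ℤ))) • v →
      M ((ψ^n) v) = (q ^ ((d : ℤ) - 2 * (((i-n : ℕ)) : ℤ))) • ((ψ^n) v) := by
    intro n
    induction n with
    | zero => intro i _ _ v hv; simpa using hv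
    | succ n ih =>
        intro i hn hi v hv
        have h1 := ih i (by omega) hi v hv
        have h2 := hstep (i-n) (by omega) ((ψ^n) v) h1
        have e : ψ ((ψ^n) v) = (ψ^(n+1)) v := by
          rw [pow_succ', Module.End.mul_apply]
        rw [e] at h2
        have e2 : (i - n - 1 : ℕ) = (i - (n+1) : ℕ) := by omega
        rw [e2] at h2
        exact h2
  have hWpow : ∀ i, i ≤ d → ∀ v, M v = (q ^ ((d : ℤ) - 2 * (i : ℤ))) • v → ∀ m, 1 ≤ m →
      (ψ^m) v ∈ ∑ j ∈ Finset.range i, Module.End.eigenspace M (q ^ ((d : ℤ) - 2 * (j : ℤ))) := by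
    intro i hi v hv m hm
    by_cases hmi : m ≤ i
    · have h := hdesc m i hmi hi v hv
      have hmem : (ψ^m) v ∈ Module.End.eigenspace M (q ^ ((d : ℤ) - 2 * (((i-m : ℕ)) : ℤ))) :=
        Module.End.mem_eigenspace_iff.mpr h
      exact hle_sum (fun j => Module.End.eigenspace M (q ^ ((d : ℤ) - 2 * (j : ℤ))))
        (i-m) i (by omega) hmem
    · have h0 := hdesc i i le_rfl hi v hv
      have h0' : M ((ψ^i) v) = (q ^ ((d : ℤ))) • ((ψ^i) v) := by
        simpa using h0
      have hz : ψ ((ψ^i) v) = 0 := hψW0 _ h0'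
      have hzz : (ψ^m) v = 0 := by
        have hsplit : ψ^m = ψ^(m-(i+1)) * (ψ * ψ^i) := by
          rw [← pow_succ', ← pow_add]
          congr 1
          omega
        rw [hsplit, Module.End.mul_apply, Module.End.mul_apply, hz, map_zero]
      rw [hzz]
      exact zero_mem _
  -- abstract conjunct-3 lemma
  have main3 : ∀ (δ : ℕ → 𝕂), δ 0 = 1 → ∀ i, i ≤ d →
      Submodule.map ((∑ m ∈ Finset.range (d+1), δ m • ψ^m) - 1)
        (Module.End.eigenspace M (q ^ ((d : ℤ) - 2 * (i : ℤ))))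
        ≤ ∑ j ∈ Finset.range i, Module.End.eigenspace M (q ^ ((d : ℤ) - 2 * (j : ℤ))) := by
    intro δ hδ i hi y hy
    obtain ⟨v, hv, rfl⟩ := hy
    rw [SetLike.mem_coe, Module.End.mem_eigenspace_iff] at hv
    have happ : ((∑ m ∈ Finset.range (d+1), δ m • ψ^m) - 1) v
        = ∑ m ∈ Finset.range d, δ (m+1) • ((ψ^(m+1)) v) := by
      rw [LinearMap.sub_apply, Module.End.one_apply, LinearMap.sum_apply]
      simp only [LinearMap.smul_apply]
      rw [Finset.sum_range_succ' (fun m => δ m • ((ψ^m) v)) d]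
      simp only [pow_zero, Module.End.one_apply, hδ, one_smul]
      rw [add_sub_cancel_right]
    rw [happ]
    apply Submodule.sum_mem
    intro m _
    exact Submodule.smul_mem _ _ (hWpow i hi v hv (m+1) (by omega))
  -- q-exponential expansions
  have hexp : ∀ c : 𝕂, qExp q (d+1) (c • ψ)
      = ∑ n ∈ Finset.range (d+1), ((q ^ (n*(n-1)/2) / qFact q n) * c^n) • ψ^n := by
    intro c
    unfold qExp
    refine Finset.sum_congr rfl fun n _ => ?_
    rw [smul_pow, smul_smul]
  have hexpi : ∀ c : 𝕂, qExpInv q (d+1) (-(c • ψ))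
      = ∑ n ∈ Finset.range (d+1), ((q⁻¹ ^ (n*(n-1)/2) / qFact q n) * (-c)^n) • ψ^n := by
    intro c
    unfold qExpInv
    refine Finset.sum_congr rfl fun n _ => ?_
    rw [← neg_smul, smul_pow, smul_smul]
  have hprod : ∀ c c' : 𝕂, qExp q (d+1) (c • ψ) * qExpInv q (d+1) (-(c' • ψ))
      = ∑ m ∈ Finset.range (d+1), (∑ k ∈ Finset.range (m+1),
          ((q ^ (k*(k-1)/2) / qFact q k) * c^k)
            * ((q⁻¹ ^ ((m-k)*((m-k)-1)/2) / qFact q (m-k)) * (-c')^(m-k))) • ψ^m := by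
    intro c c'
    rw [hexp, hexpi, sum_pow_mul_sum_pow ψ hψnil]
  have hδ0 : ∀ c c' : 𝕂, (∑ k ∈ Finset.range (0+1),
      ((q ^ (k*(k-1)/2) / qFact q k) * c^k)
        * ((q⁻¹ ^ ((0-k)*((0-k)-1)/2) / qFact q (0-k)) * (-c')^(0-k))) = 1 := by
    intro c c'
    simp [qFact]
  -- the inverse identity
  have hEF1 : ∀ c : 𝕂, qExp q (d+1) (c • ψ) * qExpInv q (d+1) (-(c • ψ)) = 1 := by
    intro c
    rw [hprod c c]
    have hcoef : ∀ m ∈ Finset.range (d+1),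
        (∑ k ∈ Finset.range (m+1),
          ((q ^ (k*(k-1)/2) / qFact q k) * c^k)
            * ((q⁻¹ ^ ((m-k)*((m-k)-1)/2) / qFact q (m-k)) * (-c)^(m-k))) • (ψ^m : Module.End 𝕂 V)
          = (c^m * qc q m) • ψ^m := by
      intro m hm
      rw [Finset.mem_range] at hm
      congr 1
      rw [qc, Finset.mul_sum]
      refine Finset.sum_congr rfl fun k hk => ?_
      rw [Finset.mem_range] at hk
      rw [qt, div_eq_mul_inv, div_eq_mul_inv, neg_pow]
      have hc : c^k * c^(m-k) = c^m := by
        rw [← pow_add]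
        congr 1
        omega
      linear_combination ((-1:𝕂)^(m-k) * q^(k*(k-1)/2) * (q⁻¹)^((m-k)*((m-k)-1)/2)
        * (qFact q k)⁻¹ * (qFact q (m-k))⁻¹) * hc
    rw [Finset.sum_congr rfl hcoef, Finset.sum_range_succ'
      (fun m => (c^m * qc q m) • (ψ^m : Module.End 𝕂 V)) d]
    have hzero : ∀ m ∈ Finset.range d, (c^(m+1) * qc q (m+1)) • (ψ^(m+1) : Module.End 𝕂 V) = 0 := by
      intro m hm
      rw [Finset.mem_range] at hm
      rw [qc_eq_zero hq hnum (by omega) (by omega), mul_zero, zero_smul]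
    rw [Finset.sum_eq_zero hzero, zero_add, pow_zero, qc_zero_eq, mul_one, pow_zero, one_smul]
  -- finish
  refine ⟨?_, ?_, ?_⟩
  · have h1 : qExp q (d+1) ((a / (q - q⁻¹)) • ψ)
        * qExpInv q (d+1) (-((a / (q - q⁻¹)) • ψ)) = 1 := hEF1 _
    have h2 : qExp q (d+1) ((a⁻¹ / (q - q⁻¹)) • ψ)
        * qExpInv q (d+1) (-((a⁻¹ / (q - q⁻¹)) • ψ)) = 1 := hEF1 _
    have h2' := mul_eq_one_comm.mp h2
    rw [mul_assoc, ← mul_assoc (qExpInv q (d+1) (-((a⁻¹ / (q - q⁻¹)) • ψ))), h2', one_mul, h1]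
  · have h1 : qExp q (d+1) ((a⁻¹ / (q - q⁻¹)) • ψ)
        * qExpInv q (d+1) (-((a⁻¹ / (q - q⁻¹)) • ψ)) = 1 := hEF1 _
    have h2 : qExp q (d+1) ((a / (q - q⁻¹)) • ψ)
        * qExpInv q (d+1) (-((a / (q - q⁻¹)) • ψ)) = 1 := hEF1 _
    have h2' := mul_eq_one_comm.mp h2
    rw [mul_assoc, ← mul_assoc (qExpInv q (d+1) (-((a / (q - q⁻¹)) • ψ))), h2', one_mul, h1]
  · intro i hi
    constructor
    · rw [hprod (a / (q - q⁻¹)) (a⁻¹ / (q - q⁻¹))]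
      exact main3 _ (hδ0 _ _) i hi
    · rw [hprod (a⁻¹ / (q - q⁻¹)) (a / (q - q⁻¹))]
      exact main3 _ (hδ0 _ _) i hi
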